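/- If G is a finite group that is not an NCI^{(2)}-group and H is any finite group, then G × H is not an NCI^{(2)}-group. -/

import Mathlib

/-- The right regular representation `G →* Sym(G)`, `g ↦ (x ↦ x * g)`
(made a homomorphism w.r.t. the permutation product `(f*g) x = f (g x)`). -/
def rightRegHom (G : Type*) [Group G] : G →* Equiv.Perm G where
  toFun g := Equiv.mulRight g⁻¹
  map_one' := by ext x; simp
  map_mul' a b := by ext x; simp [mul_assoc]

/-- The group of right translations `G_r ≤ Sym(G)`. -/
def rightReg (G : Type*) [Group G] : Subgroup (Equiv.Perm G) :=
  (rightRegHom G).range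

/-- A subgroup of `Sym(α)` is regular if it acts simply transitively. -/
def IsRegularPermSubgroup {α : Type*} (R : Subgroup (Equiv.Perm α)) : Prop :=
  ∀ x y : α, ∃! r : R, (r : Equiv.Perm α) x = y

/-- A `G`-regular subgroup of `Sym(G)`: a regular subgroup isomorphic to `G`. -/
def IsGRegular (G : Type*) [Group G] (R : Subgroup (Equiv.Perm G)) : Prop :=
  IsRegularPermSubgroup R ∧ Nonempty (R ≃* G)

/-- The holomorph `Hol(G) = G_r ⋊ Aut(G)` as a subgroup of `Sym(G)`. -/
def hol (G : Type*) [Group G] : Subgroup (Equiv.Perm G) where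
  carrier := {f : Equiv.Perm G | ∃ σ : MulAut G, ∃ a : G, ∀ g : G, f g = σ g * a}
  one_mem' := ⟨1, 1, fun g => by simp⟩
  mul_mem' := by
    rintro f f' ⟨σ, a, hf⟩ ⟨σ', a', hf'⟩
    refine ⟨σ * σ', σ a' * a, fun g => ?_⟩
    rw [Equiv.Perm.mul_apply, hf' g, hf, map_mul]
    simp [mul_assoc]
  inv_mem' := by
    rintro f ⟨σ, a, hf⟩
    refine ⟨σ⁻¹, σ⁻¹ (a⁻¹), fun g => f.injective ?_⟩
    rw [(show ∀ (e : Equiv.Perm G) (x : G), e (e⁻¹ x) = x from fun e x => e.apply_symm_apply x), hf, ← map_mul]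
    simp

/-- The 2-closure of a permutation group: all permutations preserving each
orbit of the componentwise action on ordered pairs. -/
def twoClosure {α : Type*} (K : Subgroup (Equiv.Perm α)) : Subgroup (Equiv.Perm α) where
  carrier := {f : Equiv.Perm α | ∀ x y : α, ∃ k ∈ K, f x = k x ∧ f y = k y}
  one_mem' := fun x y => ⟨1, K.one_mem, rfl, rfl⟩
  mul_mem' := by
    intro f g hf hg x y
    obtain ⟨k, hk, hk1, hk2⟩ := hg x y
    obtain ⟨k', hk', h1, h2⟩ := hf (g x) (g y)
    refine ⟨k' * k, mul_mem hk' hk, ?_, ?_⟩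
    · rw [Equiv.Perm.mul_apply, Equiv.Perm.mul_apply, h1, hk1]
    · rw [Equiv.Perm.mul_apply, Equiv.Perm.mul_apply, h2, hk2]
  inv_mem' := by
    intro f hf x y
    obtain ⟨k, hk, h1, h2⟩ := hf (f⁻¹ x) (f⁻¹ y)
    refine ⟨k⁻¹, inv_mem hk, k.injective ?_, k.injective ?_⟩
    · rw [(show ∀ (e : Equiv.Perm α) (x : α), e (e⁻¹ x) = x from fun e x => e.apply_symm_apply x), ← h1, (show ∀ (e : Equiv.Perm α) (x : α), e (e⁻¹ x) = x from fun e x => e.apply_symm_apply x)]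
    · rw [(show ∀ (e : Equiv.Perm α) (x : α), e (e⁻¹ x) = x from fun e x => e.apply_symm_apply x), ← h2, (show ∀ (e : Equiv.Perm α) (x : α), e (e⁻¹ x) = x from fun e x => e.apply_symm_apply x)]

/-- A permutation group `K` with `G_r ≤ K` is `G`-transjugate if every
`G`-regular subgroup of `K` is conjugate in `K` to `G_r`. -/
def IsTransjugate (G : Type*) [Group G] (K : Subgroup (Equiv.Perm G)) : Prop :=
  ∀ R : Subgroup (Equiv.Perm G), R ≤ K → IsGRegular G R →
    ∃ k ∈ K, Subgroup.map (MulAut.conj k).toMonoidHom R = rightReg G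

/-- `G` is an `NCI⁽²⁾`-group: every 2-closed subgroup of `Sym(G)` between
`G_r` and `Hol(G)` is `G`-transjugate. -/
def IsNCI2 (G : Type*) [Group G] : Prop :=
  ∀ K : Subgroup (Equiv.Perm G), rightReg G ≤ K → K ≤ hol G →
    twoClosure K = K → IsTransjugate G K

/-- The natural embedding `Sym(α) × Sym(β) →* Sym(α × β)`. -/
def prodPermHom (α β : Type*) : Equiv.Perm α × Equiv.Perm β →* Equiv.Perm (α × β) where
  toFun p := Equiv.prodCongr p.1 p.2
  map_one' := by ext x <;> simp
  map_mul' p q := by ext x <;> simp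


section Aux

variable {G : Type*} [Group G]

lemma mem_rightReg_iff {f : Equiv.Perm G} :
    f ∈ rightReg G ↔ ∃ a : G, ∀ x, f x = x * a := by
  constructor
  · rintro ⟨g, rfl⟩
    exact ⟨g⁻¹, fun x => rfl⟩
  · rintro ⟨a, ha⟩
    refine ⟨a⁻¹, Equiv.ext fun x => ?_⟩
    simp [rightRegHom, ha x]

lemma rightReg_regular : IsRegularPermSubgroup (rightReg G) := by
  intro x y
  refine ⟨⟨rightRegHom G (y⁻¹ * x), ⟨_, rfl⟩⟩, ?_, ?_⟩
  · show x * (y⁻¹ * x)⁻¹ = y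
    group
  · rintro ⟨r, hr⟩ hrx
    obtain ⟨a, ha⟩ := mem_rightReg_iff.mp hr
    have hxa : x * a = y := by rw [← ha x]; exact hrx
    have ha' : a = x⁻¹ * y := by rw [← hxa]; group
    refine Subtype.ext (Equiv.ext fun z => ?_)
    show r z = z * (y⁻¹ * x)⁻¹
    rw [ha z, ha']
    group

lemma twoClosure_rightReg : twoClosure (rightReg G) = rightReg G := by
  refine le_antisymm (fun f hf => ?_) (fun f hf x y => ⟨f, hf, rfl, rfl⟩)
  refine mem_rightReg_iff.mpr ⟨f 1, fun x => ?_⟩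
  obtain ⟨k, hk, h1, h2⟩ := hf x 1
  obtain ⟨a, ha⟩ := mem_rightReg_iff.mp hk
  rw [h1, h2, ha x, ha 1, one_mul]

variable {H : Type*} [Group H]

lemma rightRegHom_injective : Function.Injective (rightRegHom G) := by
  intro a b hab
  have h1 := congrArg (fun f : Equiv.Perm G => f 1) hab
  simpa [rightRegHom] using h1

lemma prodPermHom_injective : Function.Injective (prodPermHom G H) := by
  intro p q hpq
  have h1 : ∀ x : G × H, prodPermHom G H p x = prodPermHom G H q x := fun x => by rw [hpq]
  refine Prod.ext (Equiv.ext fun a => ?_) (Equiv.ext fun b => ?_)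
  · exact congrArg Prod.fst (h1 (a, 1))
  · exact congrArg Prod.snd (h1 (1, b))

end Aux

/-- If a finite group `G` is not an `NCI⁽²⁾`-group and `H`
is any finite group, then `G × H` is not an `NCI⁽²⁾`-group. -/
theorem prodnonci {G H : Type*} [Group G] [Group H] [Fintype G] [Fintype H]
    (h : ¬ IsNCI2 G) : ¬ IsNCI2 (G × H) := by
  classical
  rw [IsNCI2] at h ⊢
  push_neg at h ⊢
  obtain ⟨K, hK1, hK2, hK3, hKt⟩ := h
  rw [IsTransjugate] at hKt
  push_neg at hKt
  obtain ⟨R, hRK, hRreg, hR⟩ := hKt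
  set Φ := prodPermHom G H with hΦdef
  have hΦinj : Function.Injective Φ := prodPermHom_injective
  set K' : Subgroup (Equiv.Perm (G × H)) := Subgroup.map Φ (K.prod (rightReg H)) with hK'def
  set R' : Subgroup (Equiv.Perm (G × H)) := Subgroup.map Φ (R.prod (rightReg H)) with hR'def
  have memmap : ∀ (S : Subgroup (Equiv.Perm G)) (f : Equiv.Perm (G × H)),
      f ∈ Subgroup.map Φ (S.prod (rightReg H)) ↔
        ∃ k ∈ S, ∃ l ∈ rightReg H, Φ (k, l) = f := by
    intro S f
    constructor
    · rintro ⟨⟨k, l⟩, hkl, rfl⟩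
      exact ⟨k, hkl.1, l, hkl.2, rfl⟩
    · rintro ⟨k, hk, l, hl, rfl⟩
      exact ⟨(k, l), ⟨hk, hl⟩, rfl⟩
  refine ⟨K', ?_, ?_, ?_, ?_⟩
  · -- rightReg (G × H) ≤ K'
    rintro f ⟨⟨g, hh⟩, rfl⟩
    refine (memmap K _).mpr ⟨rightRegHom G g, hK1 ⟨g, rfl⟩, rightRegHom H hh, ⟨hh, rfl⟩,
      Equiv.ext fun x => rfl⟩
  · -- K' ≤ hol (G × H)
    rintro f hf
    obtain ⟨k, hk, l, hl, rfl⟩ := (memmap K f).mp hf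
    obtain ⟨σ, a, hσ⟩ := hK2 hk
    obtain ⟨b, hb⟩ := mem_rightReg_iff.mp hl
    refine ⟨MulEquiv.prodCongr σ (MulEquiv.refl H), (a, b), fun x => ?_⟩
    show (k x.1, l x.2) = (σ x.1 * a, x.2 * b)
    rw [hσ, hb]
  · -- twoClosure K' = K'
    refine le_antisymm (fun f hf => ?_) (fun f hf x y => ⟨f, hf, rfl, rfl⟩)
    have hsplit : ∀ x : G × H, f x = ((f (x.1, 1)).1, (f (1, x.2)).2) := by
      intro x
      have h1 : (f x).1 = (f (x.1, 1)).1 := by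
        obtain ⟨w, hw, hw1, hw2⟩ := hf x (x.1, 1)
        obtain ⟨k, hk, l, hl, rfl⟩ := (memmap K w).mp hw
        rw [hw1, hw2]
        rfl
      have h2 : (f x).2 = (f (1, x.2)).2 := by
        obtain ⟨w, hw, hw1, hw2⟩ := hf x (1, x.2)
        obtain ⟨k, hk, l, hl, rfl⟩ := (memmap K w).mp hw
        rw [hw1, hw2]
        rfl
      rw [← h1, ← h2]
    have hginj : Function.Injective (fun x : G => (f (x, 1)).1) := by
      intro x x' hxx
      have hxe : f (x, 1) = f (x', 1) := by
        rw [hsplit (x, 1), hsplit (x', 1)]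
        simp only at hxx ⊢
        rw [hxx]
      have := f.injective hxe
      exact congrArg Prod.fst this
    have heinj : Function.Injective (fun u : H => (f (1, u)).2) := by
      intro u u' huu
      have hue : f (1, u) = f (1, u') := by
        rw [hsplit (1, u), hsplit (1, u')]
        simp only at huu ⊢
        rw [huu]
      have := f.injective hue
      exact congrArg Prod.snd this
    obtain ⟨g, hg⟩ : ∃ g : Equiv.Perm G, ∀ x, g x = (f (x, 1)).1 :=
      ⟨Equiv.ofBijective _ (Finite.injective_iff_bijective.mp hginj), fun x => rfl⟩
    obtain ⟨e, he⟩ : ∃ e : Equiv.Perm H, ∀ u, e u = (f (1, u)).2 :=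
      ⟨Equiv.ofBijective _ (Finite.injective_iff_bijective.mp heinj), fun u => rfl⟩
    have hfeq : Φ (g, e) = f := by
      refine Equiv.ext fun x => ?_
      show (g x.1, e x.2) = f x
      rw [hsplit x, hg, he]
    refine (memmap K f).mpr ⟨g, ?_, e, ?_, hfeq⟩
    · rw [← hK3]
      intro x y
      obtain ⟨w, hw, hw1, hw2⟩ := hf (x, 1) (y, 1)
      obtain ⟨k, hk, l, hl, rfl⟩ := (memmap K w).mp hw
      refine ⟨k, hk, ?_, ?_⟩
      · rw [hg, hw1]; rfl
      · rw [hg, hw2]; rfl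
    · rw [← twoClosure_rightReg]
      intro u v
      obtain ⟨w, hw, hw1, hw2⟩ := hf (1, u) (1, v)
      obtain ⟨k, hk, l, hl, rfl⟩ := (memmap K w).mp hw
      refine ⟨l, hl, ?_, ?_⟩
      · rw [he, hw1]; rfl
      · rw [he, hw2]; rfl
  · -- not transjugate
    rw [IsTransjugate]
    push_neg
    obtain ⟨hreg, ⟨eR⟩⟩ := hRreg
    refine ⟨R', Subgroup.map_mono (Subgroup.prod_mono hRK le_rfl), ⟨?_, ⟨?_⟩⟩, ?_⟩
    · -- R' regular
      rintro ⟨x, u⟩ ⟨y, v⟩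
      obtain ⟨ρ, hρv, hρu⟩ := hreg x y
      obtain ⟨m, hmv, hmu⟩ := rightReg_regular u v
      refine ⟨⟨Φ (ρ, m), (memmap R _).mpr ⟨ρ, ρ.2, m, m.2, rfl⟩⟩, ?_, ?_⟩
      · show ((ρ : Equiv.Perm G) x, (m : Equiv.Perm H) u) = (y, v)
        rw [hρv, hmv]
      · rintro ⟨w, hw⟩ hwx
        obtain ⟨ρ', hρ', m', hm', rfl⟩ := (memmap R w).mp hw
        have h1 : ρ' x = y := congrArg Prod.fst hwx
        have h2 : m' u = v := congrArg Prod.snd hwx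
        have e1 : ρ' = (ρ : Equiv.Perm G) := congrArg Subtype.val (hρu ⟨ρ', hρ'⟩ h1)
        have e2 : m' = (m : Equiv.Perm H) := congrArg Subtype.val (hmu ⟨m', hm'⟩ h2)
        refine Subtype.ext ?_
        show Φ (ρ', m') = Φ (ρ, m)
        rw [e1, e2]
    · -- R' ≃* G × H
      exact (Subgroup.equivMapOfInjective _ _ hΦinj).symm.trans
        ((Subgroup.prodEquiv R (rightReg H)).trans
          (MulEquiv.prodCongr eR (MonoidHom.ofInjective rightRegHom_injective).symm))
    · -- no conjugator
      intro k' hk' hmap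
      obtain ⟨k, hk, l, hl, rfl⟩ := (memmap K k').mp hk'
      refine hR k hk ?_
      apply le_antisymm
      · rintro f ⟨ρ, hρ, rfl⟩
        have hmem : Φ ((k, l) * (ρ, 1) * (k, l)⁻¹) ∈ rightReg (G × H) := by
          rw [← hmap]
          refine ⟨Φ (ρ, 1), (memmap R _).mpr ⟨ρ, hρ, 1, one_mem _, rfl⟩, ?_⟩
          rw [map_mul, map_mul, map_inv]
          rfl
        obtain ⟨a, ha⟩ := mem_rightReg_iff.mp hmem
        refine mem_rightReg_iff.mpr ⟨a.1, fun x => ?_⟩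
        exact congrArg Prod.fst (ha (x, 1))
      · rintro f hf
        obtain ⟨a, ha⟩ := mem_rightReg_iff.mp hf
        have hmem : Φ (f, 1) ∈ rightReg (G × H) :=
          mem_rightReg_iff.mpr ⟨(a, 1), fun x => Prod.ext (ha x.1) (mul_one x.2).symm⟩
        rw [← hmap] at hmem
        obtain ⟨w, hw, hconj⟩ := hmem
        obtain ⟨ρ, hρ, m, hm, rfl⟩ := (memmap R w).mp hw
        have hc : Φ ((k, l) * (ρ, m) * (k, l)⁻¹) = Φ (f, 1) := by
          rw [map_mul, map_mul, map_inv]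
          exact hconj
        have hpair := hΦinj hc
        have hfst : k * ρ * k⁻¹ = f := congrArg Prod.fst hpair
        exact ⟨ρ, hρ, hfst⟩
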